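/- Lemma (Lemma 7, invariant on RB): In any execution of Algorithm 1 starting from the initial configuration (all agents colored ini, base station variable RB = r), every configuration satisfies either (#r − #b = 1 and RB = b) or (#r − #b = 0 and RB = r). -/
import Mathlib


/-- Agent colors of Algorithm 1. -/
inductive Col : Type
  | ini | r | b
deriving DecidableEq

/-- Base-station variable `RB`. -/
inductive RB : Type
  | r | b
deriving DecidableEq

/-- Flip the base-station variable. -/
def RB.flip : RB → RB
  | .r => .b
  | .b => .r

/-- The color assigned by the base station. -/
def RB.toCol : RB → Col
  | .r => .r
  | .b => .b

/-- An agent state: a color and a depth (`none` is ⊥). -/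
abbrev AgSt := Col × Option ℕ

/-- Effect of an interaction between the base station and one agent. -/
def bsStep (rb : RB) (a : AgSt) : RB × AgSt :=
  match a with
  | (.ini, some 1) => (rb.flip, (rb.toCol, some 1))
  | (c, none)      => (rb, (c, some 1))
  | a              => (rb, a)

/-- Effect of an interaction between two agents x and y:
first the depth propagation, then the color swap towards a smaller depth. -/
def agStep (x y : AgSt) : AgSt × AgSt :=
  let d : Option ℕ × Option ℕ :=
    match x.2, y.2 with
    | none, some e => (some (e + 1), some e)
    | some e, none => (some e, some (e + 1))
    | dx, dy       => (dx, dy)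
  match d with
  | (some dx, some dy) =>
      if dx < dy ∧ y.1 = Col.ini then ((Col.ini, some dx), (x.1, some dy))
      else if dy < dx ∧ x.1 = Col.ini then ((y.1, some dx), (Col.ini, some dy))
      else ((x.1, some dx), (y.1, some dy))
  | (dx, dy) => ((x.1, dx), (y.1, dy))

/-- A configuration: the base-station variable together with the agents' states. -/
abbrev Conf (n : ℕ) := RB × (Fin n → AgSt)

/-- One step of Algorithm 1 on a communication graph: either the base station
interacts with an adjacent agent, or two adjacent distinct agents interact. -/
def Step {n : ℕ} (Adj : Fin n → Fin n → Prop) (BAdj : Fin n → Prop)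
    (c c' : Conf n) : Prop :=
  (∃ i : Fin n, BAdj i ∧ c'.1 = (bsStep c.1 (c.2 i)).1 ∧
      c'.2 = Function.update c.2 i (bsStep c.1 (c.2 i)).2) ∨
  (c'.1 = c.1 ∧ ∃ i j : Fin n, i ≠ j ∧ Adj i j ∧
      c'.2 = Function.update (Function.update c.2 i (agStep (c.2 i) (c.2 j)).1) j
        (agStep (c.2 i) (c.2 j)).2)

/-- Number of agents whose color is `x`. -/
def cnt {n : ℕ} (C : Fin n → AgSt) (x : Col) : ℕ :=
  (Finset.univ.filter fun a => (C a).1 = x).card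

lemma cnt_update {n : ℕ} (C : Fin n → AgSt) (i : Fin n) (a : AgSt) (x : Col) :
    cnt (Function.update C i a) x + (if (C i).1 = x then 1 else 0)
      = cnt C x + (if a.1 = x then 1 else 0) := by
  classical
  unfold cnt
  rw [Finset.card_filter, Finset.card_filter]
  have h : (fun k => if ((Function.update C i a) k).1 = x then 1 else 0)
      = Function.update (fun k => if (C k).1 = x then 1 else 0) i
        (if a.1 = x then 1 else 0) := by
    funext k
    by_cases hk : k = i
    · subst hk; simp
    · simp [Function.update_of_ne hk]
  rw [h, Finset.sum_update_of_mem (Finset.mem_univ i),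
    Finset.sum_eq_sum_sdiff_singleton_add (Finset.mem_univ i)
      (fun k => if (C k).1 = x then 1 else 0)]
  ring

lemma agStep_colors (u v : AgSt) :
    ((agStep u v).1.1 = u.1 ∧ (agStep u v).2.1 = v.1) ∨
    ((agStep u v).1.1 = v.1 ∧ (agStep u v).2.1 = u.1) := by
  obtain ⟨cu, du⟩ := u
  obtain ⟨cv, dv⟩ := v
  unfold agStep
  rcases du with _ | du <;> rcases dv with _ | dv <;> simp <;>
    split_ifs with h1 h2 <;> simp_all

lemma inv_step {n : ℕ} (Adj : Fin n → Fin n → Prop) (BAdj : Fin n → Prop)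
    (c c' : Conf n) (h : Step Adj BAdj c c')
    (ih : (cnt c.2 .r = cnt c.2 .b + 1 ∧ c.1 = RB.b) ∨
      (cnt c.2 .r = cnt c.2 .b ∧ c.1 = RB.r)) :
    (cnt c'.2 .r = cnt c'.2 .b + 1 ∧ c'.1 = RB.b) ∨
    (cnt c'.2 .r = cnt c'.2 .b ∧ c'.1 = RB.r) := by
  rcases h with ⟨i, _, h1, h2⟩ | ⟨h1, i, j, hij, _, h2⟩
  · -- base station step
    have hr := cnt_update c.2 i (bsStep c.1 (c.2 i)).2 Col.r
    have hb := cnt_update c.2 i (bsStep c.1 (c.2 i)).2 Col.b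
    rw [← h2] at hr hb
    rcases hA : c.2 i with ⟨ci, di⟩
    rw [hA] at hr hb h1
    rcases hrb : c.1 with _ | _ <;> rw [hrb] at ih h1 hr hb <;>
      rcases ci <;> rcases di with _ | (_ | (_ | d)) <;>
      simp [bsStep, RB.flip, RB.toCol] at h1 hr hb <;>
      simp_all <;> omega
  · -- agent-agent step
    have hCj : (Function.update c.2 i (agStep (c.2 i) (c.2 j)).1) j = c.2 j := by
      rw [Function.update_of_ne (Ne.symm hij)]
    have key : ∀ x : Col, cnt c'.2 x = cnt c.2 x := by
      intro x
      have h1' := cnt_update (Function.update c.2 i (agStep (c.2 i) (c.2 j)).1) j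
        (agStep (c.2 i) (c.2 j)).2 x
      have h2' := cnt_update c.2 i (agStep (c.2 i) (c.2 j)).1 x
      rw [← h2, hCj] at h1'
      rcases agStep_colors (c.2 i) (c.2 j) with ⟨e1, e2⟩ | ⟨e1, e2⟩ <;>
        rw [e1] at h2' <;> rw [e2] at h1' <;> omega
    rw [h1, key, key]
    exact ih

theorem stmt14 (n : ℕ) (Adj : Fin n → Fin n → Prop) (BAdj : Fin n → Prop)
    (C : Conf n)
    (hreach : Relation.ReflTransGen (Step Adj BAdj)
      (RB.r, fun _ => (Col.ini, none)) C) :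
    (cnt C.2 .r = cnt C.2 .b + 1 ∧ C.1 = RB.b) ∨
    (cnt C.2 .r = cnt C.2 .b ∧ C.1 = RB.r) := by
  induction hreach with
  | refl => right; simp [cnt]
  | tail _ hstep ih => exact inv_step Adj BAdj _ _ hstep ih
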